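/- Let G = (V, E) be an undirected graph on V = {1,...,q}, let (D, μ) be a σ-finite measure space, and let (φ_l)_{l∈ℕ} be an orthonormal family in L²(μ). For each l ∈ ℕ let Σ_l and Σ*_l be q×q real symmetric positive definite matrices, write σ_{lij} = (Σ_l)_{ij}, σ*_{lij} = (Σ*_l)_{ij}, and ω*_{lij} = ((Σ*_l)⁻¹)_{ij}. Assume the square-summability conditions: for all i,j, Σ_l σ_{lij}² < ∞, Σ_l σ*_{lij}² < ∞, and Σ_l (ω*_{lij} / (ω*_{lii} ω*_{ljj} − ω*_{lij}²))² < ∞. Define, as elements of L²(μ ⊗ μ), C_{ij} = Σ_l σ_{lij} (φ_l ⊗ φ_l), C*_{ij} = Σ_l σ*_{lij} (φ_l ⊗ φ_l), and K*_{ij} = Σ_l (−ω*_{lij} / (ω*_{lii} ω*_{ljj} − ω*_{lij}²)) (φ_l ⊗ φ_l). Then the following are equivalent: (a) C*_{ij} = C_{ij} in L²(μ ⊗ μ) for every pair with i = j or (i,j) ∈ E, and K*_{ij} = 0 in L²(μ ⊗ μ) for every pair with i ≠ j and (i,j) ∉ E; (b) for every l, Σ*_l is the covariance selection of Σ_l with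 respect to G, i.e., σ*_{lij} = σ_{lij} whenever i = j or (i,j) ∈ E, and ω*_{lij} = 0 whenever i ≠ j and (i,j) ∉ E. -/

import Mathlib

open MeasureTheory Filter Topology Finset
open scoped RealInnerProductSpace

section Aux
variable {D : Type*} [MeasurableSpace D] {μ : Measure D} [SigmaFinite μ]

noncomputable def psiFun (φ : ℕ → Lp ℝ 2 μ) (l : ℕ) : D × D → ℝ :=
  fun st => φ l st.1 * φ l st.2

lemma memLp_psiFun (φ : ℕ → Lp ℝ 2 μ) (l : ℕ) : MemLp (psiFun φ l) 2 (μ.prod μ) := by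
  have hf := Lp.aestronglyMeasurable (φ l)
  have h1 : AEStronglyMeasurable (psiFun φ l) (μ.prod μ) :=
    (hf.comp_quasiMeasurePreserving Measure.quasiMeasurePreserving_fst).mul
      (hf.comp_quasiMeasurePreserving Measure.quasiMeasurePreserving_snd)
  rw [memLp_two_iff_integrable_sq h1]
  have hint : Integrable (fun x => (φ l x : ℝ) * (φ l x : ℝ)) μ := by
    have := L2.integrable_inner (𝕜 := ℝ) (φ l) (φ l)
    simpa [RCLike.inner_apply, pow_two] using this
  have := hint.mul_prod hint
  refine this.congr (Filter.Eventually.of_forall fun st => ?_)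
  simp only [psiFun]; ring

noncomputable def psi (φ : ℕ → Lp ℝ 2 μ) (l : ℕ) : Lp ℝ 2 (μ.prod μ) :=
  (memLp_psiFun φ l).toLp _

lemma orthonormal_psi {φ : ℕ → Lp ℝ 2 μ} (hφ : Orthonormal ℝ φ) :
    Orthonormal ℝ (psi φ) := by
  rw [orthonormal_iff_ite] at hφ ⊢
  intro l m
  have key : (inner ℝ (psi φ l) (psi φ m) : ℝ) = (inner ℝ (φ l) (φ m) : ℝ) * (inner ℝ (φ l) (φ m) : ℝ) := by
    rw [L2.inner_def, L2.inner_def]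
    have h1 : ∫ st, (inner ℝ ((psi φ l : D × D → ℝ) st) ((psi φ m : D × D → ℝ) st) : ℝ) ∂(μ.prod μ)
        = ∫ st : D × D, (fun s => (φ l s : ℝ) * (φ m s : ℝ)) st.1 *
            (fun t => (φ l t : ℝ) * (φ m t : ℝ)) st.2 ∂(μ.prod μ) := by
      refine integral_congr_ae ?_
      filter_upwards [MemLp.coeFn_toLp (memLp_psiFun φ l), MemLp.coeFn_toLp (memLp_psiFun φ m)]
        with st h1 h2
      show (inner ℝ ((memLp_psiFun φ l).toLp _ st) ((memLp_psiFun φ m).toLp _ st) : ℝ) = _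
      rw [h1, h2]
      simp only [RCLike.inner_apply, conj_trivial, psiFun]
      ring
    rw [h1, integral_prod_mul (f := fun s : D => (φ l s : ℝ) * (φ m s : ℝ))
      (g := fun t : D => (φ l t : ℝ) * (φ m t : ℝ))]
    congr 1 <;> · refine integral_congr_ae (Filter.Eventually.of_forall fun x => ?_)
                  simp [RCLike.inner_apply]; ring
  rw [key, hφ l m]
  by_cases h : l = m <;> simp [h]

lemma expandL2 (φ : ℕ → Lp ℝ 2 μ) (a : ℕ → ℝ) (f : D × D → ℝ)
    (hmeas : AEStronglyMeasurable f (μ.prod μ))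
    (htend : Tendsto (fun n => eLpNorm
      (fun st : D × D => f st - ∑ l ∈ range n, a l * (φ l st.1 * φ l st.2))
      2 (μ.prod μ)) atTop (𝓝 0)) :
    ∃ hf : MemLp f 2 (μ.prod μ),
      Tendsto (fun n => ∑ l ∈ range n, a l • psi φ l) atTop (𝓝 (hf.toLp f)) := by
  set S : ℕ → D × D → ℝ := fun n st => ∑ l ∈ range n, a l * (φ l st.1 * φ l st.2) with hSdef
  have hSmem : ∀ n, MemLp (S n) 2 (μ.prod μ) := by
    intro n
    have : ∀ l ∈ range n, MemLp (fun st : D × D => a l * (φ l st.1 * φ l st.2)) 2 (μ.prod μ) :=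
      fun l _ => (memLp_psiFun φ l).const_mul (a l)
    have h := memLp_finset_sum' (range n) this
    have he : (∑ i ∈ range n, fun st : D × D => a i * ((φ i : D → ℝ) st.1 * (φ i : D → ℝ) st.2))
        = S n := by funext st; simp [S]
    rwa [he] at h
  have hf : MemLp f 2 (μ.prod μ) := by
    have hev : ∀ᶠ n in atTop, eLpNorm (fun st : D × D => f st - S n st) 2 (μ.prod μ) < 1 :=
      htend.eventually (gt_mem_nhds (by norm_num))
    obtain ⟨n₀, hn₀⟩ := hev.exists
    have hsub : MemLp (fun st : D × D => f st - S n₀ st) 2 (μ.prod μ) :=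
      ⟨hmeas.sub (hSmem n₀).1, hn₀.trans_le le_top⟩
    have : f = fun st => (f st - S n₀ st) + S n₀ st := by funext st; ring
    rw [this]
    exact hsub.add (hSmem n₀)
  refine ⟨hf, ?_⟩
  have hP : ∀ n, ((∑ l ∈ range n, a l • psi φ l : Lp ℝ 2 (μ.prod μ)) : D × D → ℝ)
      =ᵐ[μ.prod μ] S n := by
    intro n
    induction n with
    | zero => simp only [range_zero, sum_empty]
              filter_upwards [Lp.coeFn_zero (E := ℝ) (p := 2) (μ := μ.prod μ)] with st h
              simpa [S] using h
    | succ n ih =>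
      rw [sum_range_succ]
      filter_upwards [Lp.coeFn_add (∑ l ∈ range n, a l • psi φ l) (a n • psi φ n),
        Lp.coeFn_smul (a n) (psi φ n), MemLp.coeFn_toLp (memLp_psiFun φ n), ih] with st h1 h2 h3 h4
      have h3' : (psi φ n : D × D → ℝ) st = psiFun φ n st := h3
      simp only [h1, Pi.add_apply, h4, h2, Pi.smul_apply, h3', S, sum_range_succ, smul_eq_mul,
        psiFun]
  have hnorm : ∀ n, ‖(∑ l ∈ range n, a l • psi φ l) - hf.toLp f‖
      = (eLpNorm (fun st : D × D => f st - S n st) 2 (μ.prod μ)).toReal := by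
    intro n
    rw [norm_sub_rev, Lp.norm_def]
    congr 1
    refine eLpNorm_congr_ae ?_
    filter_upwards [Lp.coeFn_sub (hf.toLp f) (∑ l ∈ range n, a l • psi φ l),
      MemLp.coeFn_toLp hf, hP n] with st h1 h2 h3
    simp only [h1, Pi.sub_apply, h2, h3]
  rw [tendsto_iff_norm_sub_tendsto_zero]
  have : Tendsto (fun n => (eLpNorm (fun st : D × D => f st - S n st) 2 (μ.prod μ)).toReal)
      atTop (𝓝 0) := by
    have := (ENNReal.tendsto_toReal (a := 0) (by simp)).comp htend
    exact this
  exact this.congr fun n => (hnorm n).symm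

lemma coeff_eq {φ : ℕ → Lp ℝ 2 μ} (hφ : Orthonormal ℝ φ) {a : ℕ → ℝ} {f : D × D → ℝ}
    (hf : MemLp f 2 (μ.prod μ))
    (htendLp : Tendsto (fun n => ∑ l ∈ range n, a l • psi φ l) atTop (𝓝 (hf.toLp f)))
    (m : ℕ) : a m = (inner ℝ (psi φ m) (hf.toLp f) : ℝ) := by
  have h1 : Tendsto (fun n => (inner ℝ (psi φ m) (∑ l ∈ range n, a l • psi φ l) : ℝ)) atTop
      (𝓝 (inner ℝ (psi φ m) (hf.toLp f) : ℝ)) := tendsto_const_nhds.inner htendLp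
  have h2 : ∀ᶠ n in atTop, (inner ℝ (psi φ m) (∑ l ∈ range n, a l • psi φ l) : ℝ) = a m := by
    filter_upwards [eventually_ge_atTop (m + 1)] with n hn
    exact (orthonormal_psi hφ).inner_right_sum a (mem_range.mpr hn)
  exact (tendsto_nhds_unique (h1.congr' h2) tendsto_const_nhds).symm

lemma coeffs_unique {φ : ℕ → Lp ℝ 2 μ} (hφ : Orthonormal ℝ φ) {a b : ℕ → ℝ} {f g : D × D → ℝ}
    (hfm : AEStronglyMeasurable f (μ.prod μ)) (hgm : AEStronglyMeasurable g (μ.prod μ))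
    (hta : Tendsto (fun n => eLpNorm
      (fun st : D × D => f st - ∑ l ∈ range n, a l * (φ l st.1 * φ l st.2))
      2 (μ.prod μ)) atTop (𝓝 0))
    (htb : Tendsto (fun n => eLpNorm
      (fun st : D × D => g st - ∑ l ∈ range n, b l * (φ l st.1 * φ l st.2))
      2 (μ.prod μ)) atTop (𝓝 0))
    (hfg : f =ᵐ[μ.prod μ] g) (m : ℕ) : a m = b m := by
  obtain ⟨hf, hfa⟩ := expandL2 φ a f hfm hta
  obtain ⟨hg, hgb⟩ := expandL2 φ b g hgm htb
  have heq : hf.toLp f = hg.toLp g := MemLp.toLp_congr hf hg hfg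
  rw [coeff_eq hφ hf hfa m, coeff_eq hφ hg hgb m, heq]

lemma ae_eq_of_coeffs (φ : ℕ → Lp ℝ 2 μ) {a : ℕ → ℝ} {f g : D × D → ℝ}
    (hfm : AEStronglyMeasurable f (μ.prod μ)) (hgm : AEStronglyMeasurable g (μ.prod μ))
    (hta : Tendsto (fun n => eLpNorm
      (fun st : D × D => f st - ∑ l ∈ range n, a l * (φ l st.1 * φ l st.2))
      2 (μ.prod μ)) atTop (𝓝 0))
    (htb : Tendsto (fun n => eLpNorm
      (fun st : D × D => g st - ∑ l ∈ range n, a l * (φ l st.1 * φ l st.2))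
      2 (μ.prod μ)) atTop (𝓝 0)) : f =ᵐ[μ.prod μ] g := by
  obtain ⟨hf, hfa⟩ := expandL2 φ a f hfm hta
  obtain ⟨hg, hgb⟩ := expandL2 φ a g hgm htb
  have heq : hf.toLp f = hg.toLp g := tendsto_nhds_unique hfa hgb
  exact hf.coeFn_toLp.symm.trans (heq ▸ hg.coeFn_toLp)

end Aux

lemma posDef_minor {q : ℕ} {M : Matrix (Fin q) (Fin q) ℝ} (hM : M.PosDef) {i j : Fin q}
    (hij : i ≠ j) : 0 < M i i * M j j - M i j ^ 2 := by
  have hsym : M j i = M i j := by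
    have := hM.isHermitian.apply i j
    simpa using this
  have hii : 0 < M i i := by
    have h := hM.dotProduct_mulVec_pos (x := Pi.single i 1) (by
      intro h; simpa using congrFun h i)
    simpa [single_dotProduct, Matrix.mulVec_single] using h
  set x : Fin q → ℝ := Pi.single i (-(M i j)) + Pi.single j (M i i) with hx
  have hxne : x ≠ 0 := by
    intro h
    have := congrFun h j
    simp [hx, Pi.single_eq_of_ne (Ne.symm hij)] at this
    exact hii.ne' this
  have hpos := hM.dotProduct_mulVec_pos hxne
  have hval : dotProduct (star x) (M.mulVec x) = M i i * (M i i * M j j - M i j ^ 2) := by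
    simp only [hx, star_trivial, Matrix.mulVec_add, Matrix.mulVec_single,
      dotProduct_add, add_dotProduct, single_dotProduct,
      Pi.add_apply, Pi.smul_apply, op_smul_eq_mul, Matrix.col_apply, hsym]
    ring
  rw [hval] at hpos
  nlinarith


/-- `B` is the covariance selection (Dempster) of `A` with respect to the graph `G`:
`B` is positive definite, agrees with `A` on the diagonal and the edge set, and its
inverse vanishes off the diagonal and the edge set. -/
def IsCovSel {q : ℕ} (G : SimpleGraph (Fin q)) (A B : Matrix (Fin q) (Fin q) ℝ) : Prop :=
  B.PosDef ∧ (∀ i j, (i = j ∨ G.Adj i j) → B i j = A i j) ∧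
    ∀ i j, i ≠ j → ¬ G.Adj i j → B⁻¹ i j = 0

theorem stmt_0
    {D : Type*} [MeasurableSpace D] (μ : Measure D) [SigmaFinite μ]
    (q : ℕ) (G : SimpleGraph (Fin q))
    (φ : ℕ → Lp ℝ 2 μ) (hφ : Orthonormal ℝ φ)
    (Sig Sigs : ℕ → Matrix (Fin q) (Fin q) ℝ)
    (hSig : ∀ l, (Sig l).PosDef) (hSigs : ∀ l, (Sigs l).PosDef)
    (hsum1 : ∀ i j, Summable fun l => (Sig l i j) ^ 2)
    (hsum2 : ∀ i j, Summable fun l => (Sigs l i j) ^ 2)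
    (hsum3 : ∀ i j, Summable fun l =>
      ((Sigs l)⁻¹ i j / ((Sigs l)⁻¹ i i * (Sigs l)⁻¹ j j - ((Sigs l)⁻¹ i j) ^ 2)) ^ 2)
    -- `C`, `Cs`, `K` are the elements of `L²(μ ⊗ μ)` given by the series
    -- `∑ l, σ_{lij} (φ_l ⊗ φ_l)`, `∑ l, σ*_{lij} (φ_l ⊗ φ_l)` and
    -- `∑ l, (-ω*_{lij}/(ω*_{lii} ω*_{ljj} - ω*_{lij}²)) (φ_l ⊗ φ_l)`, the series
    -- converging in `L²(μ ⊗ μ)`.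
    (C Cs K : Fin q → Fin q → D × D → ℝ)
    (hCmeas : ∀ i j, AEStronglyMeasurable (C i j) (μ.prod μ))
    (hCsmeas : ∀ i j, AEStronglyMeasurable (Cs i j) (μ.prod μ))
    (hKmeas : ∀ i j, AEStronglyMeasurable (K i j) (μ.prod μ))
    (hC : ∀ i j, Tendsto (fun n => eLpNorm
      (fun st : D × D => C i j st - ∑ l ∈ range n, Sig l i j * (φ l st.1 * φ l st.2))
      2 (μ.prod μ)) atTop (𝓝 0))
    (hCs : ∀ i j, Tendsto (fun n => eLpNorm
      (fun st : D × D => Cs i j st - ∑ l ∈ range n, Sigs l i j * (φ l st.1 * φ l st.2))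
      2 (μ.prod μ)) atTop (𝓝 0))
    (hK : ∀ i j, Tendsto (fun n => eLpNorm
      (fun st : D × D => K i j st - ∑ l ∈ range n,
        (-(Sigs l)⁻¹ i j / ((Sigs l)⁻¹ i i * (Sigs l)⁻¹ j j - ((Sigs l)⁻¹ i j) ^ 2)) *
          (φ l st.1 * φ l st.2))
      2 (μ.prod μ)) atTop (𝓝 0)) :
    ((∀ i j, (i = j ∨ G.Adj i j) → Cs i j =ᵐ[μ.prod μ] C i j) ∧
      (∀ i j, i ≠ j → ¬ G.Adj i j → K i j =ᵐ[μ.prod μ] fun _ => (0 : ℝ))) ↔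
      ∀ l, IsCovSel G (Sig l) (Sigs l) := by
  constructor
  · rintro ⟨h1, h2⟩ l
    refine ⟨hSigs l, ?_, ?_⟩
    · intro i j hij
      exact coeffs_unique hφ (hCsmeas i j) (hCmeas i j) (hCs i j) (hC i j) (h1 i j hij) l
    · intro i j hne hnadj
      have hden : 0 < (Sigs l)⁻¹ i i * (Sigs l)⁻¹ j j - ((Sigs l)⁻¹ i j) ^ 2 :=
        posDef_minor (hSigs l).inv hne
      have htend0 : Tendsto (fun n => eLpNorm
          (fun st : D × D => (fun _ : D × D => (0 : ℝ)) st -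
            ∑ m ∈ range n, (0 : ℝ) * (φ m st.1 * φ m st.2)) 2 (μ.prod μ)) atTop (𝓝 0) := by
        have : ∀ n : ℕ, eLpNorm
            (fun st : D × D => (fun _ : D × D => (0 : ℝ)) st -
              ∑ m ∈ range n, (0 : ℝ) * (φ m st.1 * φ m st.2)) 2 (μ.prod μ) = 0 := by
          intro n
          have : (fun st : D × D => (fun _ : D × D => (0 : ℝ)) st -
              ∑ m ∈ range n, (0 : ℝ) * (φ m st.1 * φ m st.2)) = fun _ => (0 : ℝ) := by
            funext st; simp
          rw [this, eLpNorm_zero']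
        simp only [this]
        exact tendsto_const_nhds
      have hc0 := coeffs_unique hφ (hKmeas i j) aestronglyMeasurable_const
        (hK i j) htend0 (h2 i j hne hnadj) l
      have : -(Sigs l)⁻¹ i j = 0 := by
        rcases div_eq_zero_iff.mp hc0 with h | h
        · exact h
        · exact absurd h hden.ne'
      linarith [this]
  · intro hcs
    constructor
    · intro i j hij
      have hcoef : ∀ m, Sigs m i j = Sig m i j := fun m => (hcs m).2.1 i j hij
      have hCs' := hCs i j
      simp only [hcoef] at hCs'
      exact ae_eq_of_coeffs φ (hCsmeas i j) (hCmeas i j) hCs' (hC i j)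
    · intro i j hne hnadj
      have hcoef : ∀ m, (-(Sigs m)⁻¹ i j /
          ((Sigs m)⁻¹ i i * (Sigs m)⁻¹ j j - ((Sigs m)⁻¹ i j) ^ 2)) = 0 := by
        intro m
        rw [(hcs m).2.2 i j hne hnadj]
        simp
      have hK' := hK i j
      simp only [hcoef, zero_mul, Finset.sum_const_zero, sub_zero] at hK'
      have h0 : eLpNorm (K i j) 2 (μ.prod μ) = 0 :=
        tendsto_nhds_unique tendsto_const_nhds hK'
      have := (eLpNorm_eq_zero_iff (hKmeas i j) (by norm_num)).mp h0
      exact this
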